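/- Let H be a full-rank (n−k)×n check matrix of a code C = ker H over F₂, σ₁, σ₂ n×n permutation matrices and h₁, h₂ invertible matrices with h₁H = Hσ₁ and h₂⁻ᵀH = Hσ₂. Then for the hypergraph-product check matrices H_X = [H⊗I | I⊗Hᵀ] and H_Z = [I⊗H | Hᵀ⊗I], the block-diagonal transformation (σ₁⊗σ₂) ⊕ (h₁⊗h₂) satisfies H_X·((σ₁⊗σ₂)⊕(h₁⊗h₂)) = (h₁⊗σ₂)·H_X. -/

import Mathlib

open Matrix Kronecker

lemma perm_mul_transpose_eq_one {n : Type*} [Fintype n] [DecidableEq n]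
    (σ : Equiv.Perm n) :
    σ.permMatrix (ZMod 2) * (σ.permMatrix (ZMod 2))ᵀ = 1 := by
  rw [← PEquiv.toMatrix_symm, ← Equiv.toPEquiv_symm, ← PEquiv.toMatrix_trans,
    ← Equiv.toPEquiv_trans]
  simp [Equiv.self_trans_symm, Equiv.toPEquiv_refl, PEquiv.toMatrix_refl]

/-- For h₁H = Hσ₁ and h₂⁻ᵀH = Hσ₂, the hypergraph-product check matrix
H_X = [H⊗I | I⊗Hᵀ] satisfies H_X·((σ₁⊗σ₂) ⊕ (h₁⊗h₂)) = (h₁⊗σ₂)·H_X. -/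
theorem hgp_automorphism_stabilizer_preserving (k n m : ℕ) (hm : m = n - k)
    (H : Matrix (Fin m) (Fin n) (ZMod 2))
    (hHfull : LinearIndependent (ZMod 2) (fun i => H i))
    (σ₁ σ₂ : Equiv.Perm (Fin n)) (h₁ h₂ : GL (Fin m) (ZMod 2))
    (hh₁ : (h₁ : Matrix (Fin m) (Fin m) (ZMod 2)) * H = H * σ₁.permMatrix (ZMod 2))
    (hh₂ : ((h₂⁻¹ : GL (Fin m) (ZMod 2)) : Matrix (Fin m) (Fin m) (ZMod 2))ᵀ * H =
      H * σ₂.permMatrix (ZMod 2)) :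
    Matrix.fromCols (H ⊗ₖ (1 : Matrix (Fin n) (Fin n) (ZMod 2)))
        ((1 : Matrix (Fin m) (Fin m) (ZMod 2)) ⊗ₖ Hᵀ) *
      Matrix.fromBlocks
        (σ₁.permMatrix (ZMod 2) ⊗ₖ σ₂.permMatrix (ZMod 2)) 0 0
        ((h₁ : Matrix (Fin m) (Fin m) (ZMod 2)) ⊗ₖ
          (h₂ : Matrix (Fin m) (Fin m) (ZMod 2))) =
    ((h₁ : Matrix (Fin m) (Fin m) (ZMod 2)) ⊗ₖ σ₂.permMatrix (ZMod 2)) *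
      Matrix.fromCols (H ⊗ₖ (1 : Matrix (Fin n) (Fin n) (ZMod 2)))
        ((1 : Matrix (Fin m) (Fin m) (ZMod 2)) ⊗ₖ Hᵀ) := by
  have key₂ : Hᵀ * (h₂ : Matrix (Fin m) (Fin m) (ZMod 2)) =
      σ₂.permMatrix (ZMod 2) * Hᵀ := by
    have h2inv : ((h₂⁻¹ : GL (Fin m) (ZMod 2)) : Matrix (Fin m) (Fin m) (ZMod 2)) *
        (h₂ : Matrix (Fin m) (Fin m) (ZMod 2)) = 1 := by
      exact_mod_cast h₂.inv_mul
    have hT := congrArg Matrix.transpose hh₂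
    rw [Matrix.transpose_mul, Matrix.transpose_transpose, Matrix.transpose_mul] at hT
    -- hT : Hᵀ * (h₂⁻¹) = (σ₂.permMatrix _)ᵀ * Hᵀ
    have h1 : Hᵀ = (σ₂.permMatrix (ZMod 2))ᵀ * Hᵀ *
        (h₂ : Matrix (Fin m) (Fin m) (ZMod 2)) := by
      calc Hᵀ = Hᵀ * (((h₂⁻¹ : GL (Fin m) (ZMod 2)) : Matrix (Fin m) (Fin m) (ZMod 2)) *
            (h₂ : Matrix (Fin m) (Fin m) (ZMod 2))) := by rw [h2inv, Matrix.mul_one]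
        _ = (σ₂.permMatrix (ZMod 2))ᵀ * Hᵀ * (h₂ : Matrix (Fin m) (Fin m) (ZMod 2)) := by
            rw [← Matrix.mul_assoc, hT]
    calc Hᵀ * (h₂ : Matrix (Fin m) (Fin m) (ZMod 2))
        = σ₂.permMatrix (ZMod 2) * ((σ₂.permMatrix (ZMod 2))ᵀ * Hᵀ *
          (h₂ : Matrix (Fin m) (Fin m) (ZMod 2))) := by
          rw [← Matrix.mul_assoc, ← Matrix.mul_assoc, perm_mul_transpose_eq_one,
            Matrix.one_mul]
      _ = σ₂.permMatrix (ZMod 2) * Hᵀ := by rw [← h1]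
  rw [Matrix.fromCols_mul_fromBlocks, Matrix.mul_fromCols]
  simp only [Matrix.mul_zero, Matrix.zero_mul, add_zero, zero_add,
    ← Matrix.mul_kronecker_mul, ← hh₁, key₂, Matrix.one_mul, Matrix.mul_one]
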